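/- Linear-algebra model of Lemma 5.3 (fibprodflip): let T_M, T_Γ, T_X be oriented finite-dimensional real vector spaces, F: T_M → T_X and G: T_Γ → T_X linear maps with G - F: T_M ⊕ T_Γ → T_X surjective (here (G-F)(v,w) = G(w) - F(v)), and let W = ker(G - F) with the orientation making 0 → W → T_M ⊕ T_Γ → T_X → 0 orientation-compatible. Suppose σ_M, σ_Γ, σ_X are orientation-defining linear automorphisms of T_M, T_Γ, T_X with signs s_M, s_Γ, s_X ∈ {±1}, satisfying F∘σ_M = σ_X∘F and G∘σ_Γ = σ_X∘G. Then the induced automorphism of W has sign s_M · s_Γ · s_X. -/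

import Mathlib

namespace Stmt6

/-- `oAB` is the product orientation of `oA` and `oB`. -/
def IsProdOrient {A B : Type*} [AddCommGroup A] [Module ℝ A]
    [AddCommGroup B] [Module ℝ B] (a b N : ℕ) (h : a + b = N)
    (oA : Orientation ℝ A (Fin a)) (oB : Orientation ℝ B (Fin b))
    (oAB : Orientation ℝ (A × B) (Fin N)) : Prop :=
  ∃ (bA : Module.Basis (Fin a) ℝ A) (bB : Module.Basis (Fin b) ℝ B),
    bA.orientation = oA ∧ bB.orientation = oB ∧
    ((bA.prod bB).reindex (finSumFinEquiv.trans (finCongr h))).orientation = oAB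

/-- The short exact sequence `0 → V' -f→ V -g→ V'' → 0` is
orientation-compatible with respect to the orientations `o', o, o''`. -/
def SeqCompat {V' V V'' : Type*} [AddCommGroup V'] [Module ℝ V']
    [AddCommGroup V] [Module ℝ V] [AddCommGroup V''] [Module ℝ V'']
    (m n N : ℕ) (h : m + n = N) (f : V' →ₗ[ℝ] V) (g : V →ₗ[ℝ] V'')
    (o' : Orientation ℝ V' (Fin m)) (o : Orientation ℝ V (Fin N))
    (o'' : Orientation ℝ V'' (Fin n)) : Prop :=
  ∃ (b' : Module.Basis (Fin m) ℝ V') (b'' : Module.Basis (Fin n) ℝ V'')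
    (s : V'' →ₗ[ℝ] V) (B : Module.Basis (Fin N) ℝ V),
    b'.orientation = o' ∧ b''.orientation = o'' ∧
    g.comp s = LinearMap.id ∧
    (∀ i : Fin (m + n),
      B (finCongr h i) = Fin.addCases (fun k => f (b' k)) (fun k => s (b'' k)) i) ∧
    B.orientation = o

/-- The automorphism `e` of an oriented vector space has sign `s ∈ {±1}`. -/
def HasSign {V : Type*} [AddCommGroup V] [Module ℝ V] {n : ℕ}
    (e : V ≃ₗ[ℝ] V) (o : Orientation ℝ V (Fin n)) (s : ℤ) : Prop :=
  (s = 1 ∧ Orientation.map (Fin n) e o = o) ∨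
  (s = -1 ∧ Orientation.map (Fin n) e o = -o)

end Stmt6

set_option maxHeartbeats 2000000 in
open Stmt6 in
/-- Linear-algebra model of Lemma 5.3: with `W = ker(G - F)` carrying the
fiber-product orientation, and orientation-defining automorphisms
`σ_M, σ_Γ, σ_X` of signs `s_M, s_Γ, s_X` intertwining `F` and `G`, the induced
automorphism of `W` has sign `s_M · s_Γ · s_X`. -/
theorem stmt_6 {TM TΓ TX : Type*}
    [AddCommGroup TM] [Module ℝ TM] [AddCommGroup TΓ] [Module ℝ TΓ]
    [AddCommGroup TX] [Module ℝ TX]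
    (dM dΓ dX m : ℕ) (hm : m + dX = dM + dΓ)
    (hdM : Module.finrank ℝ TM = dM) (hdΓ : Module.finrank ℝ TΓ = dΓ)
    (hdX : Module.finrank ℝ TX = dX)
    (F : TM →ₗ[ℝ] TX) (G : TΓ →ₗ[ℝ] TX)
    (D : (TM × TΓ) →ₗ[ℝ] TX)
    (hD : D = G.comp (LinearMap.snd ℝ TM TΓ) - F.comp (LinearMap.fst ℝ TM TΓ))
    (hsurj : Function.Surjective D)
    (oM : Orientation ℝ TM (Fin dM)) (oΓ : Orientation ℝ TΓ (Fin dΓ))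
    (oX : Orientation ℝ TX (Fin dX))
    (oMΓ : Orientation ℝ (TM × TΓ) (Fin (dM + dΓ)))
    (hMΓ : IsProdOrient dM dΓ (dM + dΓ) rfl oM oΓ oMΓ)
    (oW : Orientation ℝ (LinearMap.ker D) (Fin m))
    (hW : SeqCompat m dX (dM + dΓ) hm (LinearMap.ker D).subtype D oW oMΓ oX)
    (σM : TM ≃ₗ[ℝ] TM) (σΓ : TΓ ≃ₗ[ℝ] TΓ) (σX : TX ≃ₗ[ℝ] TX)
    (sM sΓ sX : ℤ)
    (hsM : HasSign σM oM sM) (hsΓ : HasSign σΓ oΓ sΓ) (hsX : HasSign σX oX sX)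
    (hFcomm : F.comp σM.toLinearMap = σX.toLinearMap.comp F)
    (hGcomm : G.comp σΓ.toLinearMap = σX.toLinearMap.comp G)
    (σW : (LinearMap.ker D) ≃ₗ[ℝ] (LinearMap.ker D))
    (hσW : ∀ x : LinearMap.ker D,
      ((σW x : TM × TΓ)) = (σM (x : TM × TΓ).1, σΓ (x : TM × TΓ).2)) :
    HasSign σW oW (sM * sΓ * sX) := by

  classical
  obtain ⟨bA, bB, hbA, hbB, hbAB⟩ := hMΓ
  obtain ⟨b', b'', s, B, hb', hb'', hsec, hBdef, hBor⟩ := hW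
  haveI : Module.Finite ℝ TM := Module.Finite.of_basis bA
  haveI : Module.Finite ℝ TΓ := Module.Finite.of_basis bB
  haveI : Module.Finite ℝ TX := Module.Finite.of_basis b''
  haveI : Module.Finite ℝ (LinearMap.ker D) := Module.Finite.of_basis b'
  have hsec' : ∀ x, D (s x) = x := by
    intro x
    have := LinearMap.ext_iff.mp hsec x
    simpa using this
  set σp : (TM × TΓ) ≃ₗ[ℝ] (TM × TΓ) := σM.prodCongr σΓ with hσp
  have hDσ : ∀ z, D (σp z) = σX (D z) := by
    intro z
    have hF := LinearMap.ext_iff.mp hFcomm z.1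
    have hG := LinearMap.ext_iff.mp hGcomm z.2
    simp only [LinearMap.comp_apply, LinearEquiv.coe_coe] at hF hG
    simp [hσp, hD, hF, hG]
  have hσWcoe : ∀ x : LinearMap.ker D, σp ((x : TM × TΓ)) = ((σW x : TM × TΓ)) := by
    intro x
    rw [hσW]
    rfl
  set eIdx : (Fin m ⊕ Fin dX) ≃ Fin (dM + dΓ) := finSumFinEquiv.trans (finCongr hm) with heIdx
  set Bs : Module.Basis (Fin m ⊕ Fin dX) ℝ (TM × TΓ) := B.reindex eIdx.symm with hBsdef
  have hBs : ∀ i, Bs i = B (eIdx i) := by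
    intro i
    simp [hBsdef]
  have hBs_inl : ∀ k, Bs (Sum.inl k) = ((b' k : TM × TΓ)) := by
    intro k
    rw [hBs]
    have h1 : eIdx (Sum.inl k) = finCongr hm (Fin.castAdd dX k) := by
      simp [heIdx]
    rw [h1, hBdef]
    simp
  have hBs_inr : ∀ k, Bs (Sum.inr k) = s (b'' k) := by
    intro k
    rw [hBs]
    have h1 : eIdx (Sum.inr k) = finCongr hm (Fin.natAdd m k) := by
      simp [heIdx]
    rw [h1, hBdef]
    simp
  set bP : Module.Basis (Fin m ⊕ Fin dX) ℝ (LinearMap.ker D × TX) := b'.prod b'' with hbP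
  set L : (LinearMap.ker D × TX) →ₗ[ℝ] (TM × TΓ) :=
    (LinearMap.ker D).subtype ∘ₗ LinearMap.fst ℝ _ _ + s ∘ₗ LinearMap.snd ℝ _ _ with hLdef
  have hLapp : ∀ z : LinearMap.ker D × TX, L z = ((z.1 : TM × TΓ)) + s z.2 := fun z => rfl
  have hLB : ∀ i, L (bP i) = Bs i := by
    rintro (k | k)
    · rw [hLapp, hBs_inl, hbP]
      simp [Module.Basis.prod_apply_inl_fst, Module.Basis.prod_apply_inl_snd]
    · rw [hLapp, hBs_inr, hbP]
      simp [Module.Basis.prod_apply_inr_fst, Module.Basis.prod_apply_inr_snd]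
  set e : (LinearMap.ker D × TX) ≃ₗ[ℝ] (TM × TΓ) := bP.equiv Bs (Equiv.refl _) with hedef
  have hLe : L = e.toLinearMap := by
    apply bP.ext
    intro i
    rw [hLB]
    simp [hedef, Module.Basis.equiv_apply]
  have heapp : ∀ z : LinearMap.ker D × TX, e z = ((z.1 : TM × TΓ)) + s z.2 := by
    intro z
    have h := LinearMap.congr_fun hLe z
    rw [hLapp z] at h
    exact h.symm
  have hsnd : ∀ z : LinearMap.ker D × TX, D (e z) = z.2 := by
    intro z
    rw [heapp]
    have h0 : D ((z.1 : TM × TΓ)) = 0 := z.1.2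
    simp [h0, hsec']
  set T : (LinearMap.ker D × TX) →ₗ[ℝ] (LinearMap.ker D × TX) :=
    e.symm.toLinearMap ∘ₗ σp.toLinearMap ∘ₗ e.toLinearMap with hTdef
  have hTapp : ∀ z, T z = e.symm (σp (e z)) := fun z => rfl
  have hdet_conj : LinearMap.det (σp.toLinearMap : (TM × TΓ) →ₗ[ℝ] (TM × TΓ))
      = LinearMap.det T := by
    rw [← LinearMap.det_conj T e]
    congr 1
    apply LinearMap.ext
    intro z
    simp [hTdef]
  have hT2 : ∀ z, (T z).2 = σX z.2 := by
    intro z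
    have h1 : (T z).2 = D (e (T z)) := (hsnd _).symm
    rw [h1, hTapp, e.apply_symm_apply, hDσ, hsnd]
  have hT1 : ∀ k, T (bP (Sum.inl k)) = (σW (b' k), 0) := by
    intro k
    rw [hTapp]
    have h1 : e (bP (Sum.inl k)) = ((b' k : TM × TΓ)) := by
      rw [hedef, Module.Basis.equiv_apply]
      simpa using hBs_inl k
    rw [h1, hσWcoe]
    have h2 : ((σW (b' k) : TM × TΓ)) = e ((σW (b' k), 0) : LinearMap.ker D × TX) := by
      rw [heapp]
      simp
    rw [h2, e.symm_apply_apply]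
  have hmat : LinearMap.toMatrix bP bP T =
      Matrix.fromBlocks (LinearMap.toMatrix b' b' σW.toLinearMap)
        ((LinearMap.toMatrix bP bP T).toBlocks₁₂) 0
        (LinearMap.toMatrix b'' b'' σX.toLinearMap) := by
    ext (i | i) (j | j)
    · rw [LinearMap.toMatrix_apply, Matrix.fromBlocks_apply₁₁, LinearMap.toMatrix_apply]
      rw [hT1 j, Module.Basis.prod_repr_inl]
      simp
    · rw [Matrix.fromBlocks_apply₁₂]
      simp [Matrix.toBlocks₁₂]
    · rw [LinearMap.toMatrix_apply, Matrix.fromBlocks_apply₂₁]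
      rw [hT1 j, Module.Basis.prod_repr_inr]
      simp
    · rw [LinearMap.toMatrix_apply, Matrix.fromBlocks_apply₂₂, LinearMap.toMatrix_apply]
      rw [Module.Basis.prod_repr_inr, hT2]
      simp [hbP]
  have hdetT : LinearMap.det T
      = LinearMap.det (σW.toLinearMap : _ →ₗ[ℝ] _) * LinearMap.det (σX.toLinearMap : _ →ₗ[ℝ] _) := by
    rw [← LinearMap.det_toMatrix bP, hmat, Matrix.det_fromBlocks_zero₂₁,
        LinearMap.det_toMatrix, LinearMap.det_toMatrix]
  have hdetp : LinearMap.det (σp.toLinearMap : (TM × TΓ) →ₗ[ℝ] (TM × TΓ))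
      = LinearMap.det (σM.toLinearMap : _ →ₗ[ℝ] _) * LinearMap.det (σΓ.toLinearMap : _ →ₗ[ℝ] _) := by
    have hcoe : (σp.toLinearMap : (TM × TΓ) →ₗ[ℝ] (TM × TΓ))
        = σM.toLinearMap.prodMap σΓ.toLinearMap := rfl
    rw [hcoe, ← LinearMap.det_toMatrix (bA.prod bB), LinearMap.toMatrix_prodMap,
        Matrix.det_fromBlocks_zero₂₁, LinearMap.det_toMatrix, LinearMap.det_toMatrix]
  have key : LinearMap.det (σM.toLinearMap : _ →ₗ[ℝ] _) * LinearMap.det (σΓ.toLinearMap : _ →ₗ[ℝ] _)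
      = LinearMap.det (σW.toLinearMap : _ →ₗ[ℝ] _) * LinearMap.det (σX.toLinearMap : _ →ₗ[ℝ] _) := by
    rw [← hdetp, hdet_conj, hdetT]
  have cardM : Fintype.card (Fin dM) = Module.finrank ℝ TM := by simp [hdM]
  have cardΓ : Fintype.card (Fin dΓ) = Module.finrank ℝ TΓ := by simp [hdΓ]
  have cardX : Fintype.card (Fin dX) = Module.finrank ℝ TX := by simp [hdX]
  have cardW : Fintype.card (Fin m) = Module.finrank ℝ (LinearMap.ker D) := by
    rw [Module.finrank_eq_card_basis b']
  have hM' : (sM = 1 ∧ 0 < LinearMap.det (σM.toLinearMap : _ →ₗ[ℝ] _)) ∨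
      (sM = -1 ∧ LinearMap.det (σM.toLinearMap : _ →ₗ[ℝ] _) < 0) := by
    rcases hsM with ⟨h1, h2⟩ | ⟨h1, h2⟩
    · exact Or.inl ⟨h1, (Orientation.map_eq_iff_det_pos oM σM cardM).1 h2⟩
    · exact Or.inr ⟨h1, (Orientation.map_eq_neg_iff_det_neg oM σM cardM).1 h2⟩
  have hΓ' : (sΓ = 1 ∧ 0 < LinearMap.det (σΓ.toLinearMap : _ →ₗ[ℝ] _)) ∨
      (sΓ = -1 ∧ LinearMap.det (σΓ.toLinearMap : _ →ₗ[ℝ] _) < 0) := by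
    rcases hsΓ with ⟨h1, h2⟩ | ⟨h1, h2⟩
    · exact Or.inl ⟨h1, (Orientation.map_eq_iff_det_pos oΓ σΓ cardΓ).1 h2⟩
    · exact Or.inr ⟨h1, (Orientation.map_eq_neg_iff_det_neg oΓ σΓ cardΓ).1 h2⟩
  have hX' : (sX = 1 ∧ 0 < LinearMap.det (σX.toLinearMap : _ →ₗ[ℝ] _)) ∨
      (sX = -1 ∧ LinearMap.det (σX.toLinearMap : _ →ₗ[ℝ] _) < 0) := by
    rcases hsX with ⟨h1, h2⟩ | ⟨h1, h2⟩
    · exact Or.inl ⟨h1, (Orientation.map_eq_iff_det_pos oX σX cardX).1 h2⟩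
    · exact Or.inr ⟨h1, (Orientation.map_eq_neg_iff_det_neg oX σX cardX).1 h2⟩
  clear hmat hdetT hdetp hdet_conj hT2 hT1 hTapp hTdef T hsnd heapp hLe hedef e hLB
  clear hLapp hLdef L hbP bP hBs_inl hBs_inr hBs hBsdef Bs heIdx eIdx hσWcoe hDσ hσp σp
  clear hsec' hBdef hBor hbAB hb' hb'' hsec hbA hbB s B b' b'' hsurj hD hσW hFcomm hGcomm F G
  rcases hM' with ⟨h1, hM⟩ | ⟨h1, hM⟩
  · rcases hΓ' with ⟨h2, hΓ⟩ | ⟨h2, hΓ⟩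
    · rcases hX' with ⟨h3, hX⟩ | ⟨h3, hX⟩
      · refine Or.inl ⟨by rw [h1, h2, h3]; norm_num, ?_⟩
        rw [Orientation.map_eq_iff_det_pos oW σW cardW]
        nlinarith [mul_pos hM hΓ, key, hX]
      · refine Or.inr ⟨by rw [h1, h2, h3]; norm_num, ?_⟩
        rw [Orientation.map_eq_neg_iff_det_neg oW σW cardW]
        nlinarith [mul_pos hM hΓ, key, hX]
    · rcases hX' with ⟨h3, hX⟩ | ⟨h3, hX⟩
      · refine Or.inr ⟨by rw [h1, h2, h3]; norm_num, ?_⟩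
        rw [Orientation.map_eq_neg_iff_det_neg oW σW cardW]
        nlinarith [mul_neg_of_pos_of_neg hM hΓ, key, hX]
      · refine Or.inl ⟨by rw [h1, h2, h3]; norm_num, ?_⟩
        rw [Orientation.map_eq_iff_det_pos oW σW cardW]
        nlinarith [mul_neg_of_pos_of_neg hM hΓ, key, hX]
  · rcases hΓ' with ⟨h2, hΓ⟩ | ⟨h2, hΓ⟩
    · rcases hX' with ⟨h3, hX⟩ | ⟨h3, hX⟩
      · refine Or.inr ⟨by rw [h1, h2, h3]; norm_num, ?_⟩
        rw [Orientation.map_eq_neg_iff_det_neg oW σW cardW]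
        nlinarith [mul_neg_of_neg_of_pos hM hΓ, key, hX]
      · refine Or.inl ⟨by rw [h1, h2, h3]; norm_num, ?_⟩
        rw [Orientation.map_eq_iff_det_pos oW σW cardW]
        nlinarith [mul_neg_of_neg_of_pos hM hΓ, key, hX]
    · rcases hX' with ⟨h3, hX⟩ | ⟨h3, hX⟩
      · refine Or.inl ⟨by rw [h1, h2, h3]; norm_num, ?_⟩
        rw [Orientation.map_eq_iff_det_pos oW σW cardW]
        nlinarith [mul_pos_of_neg_of_neg hM hΓ, key, hX]
      · refine Or.inr ⟨by rw [h1, h2, h3]; norm_num, ?_⟩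
        rw [Orientation.map_eq_neg_iff_det_neg oW σW cardW]
        nlinarith [mul_pos_of_neg_of_neg hM hΓ, key, hX]
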